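/- arXiv:2509.07344 — 7 statements merged into one kernel-verified Lean document; each statement's English description precedes it below -/
import Mathlib

section
/- Let p be a prime and let k, m be natural numbers with 1 ≤ m < p^k and p ∤ m. Then s_p(p^k − m) = (p − 1)·k + 1 − s_p(m), where s_p denotes the sum of base-p digits. -/
lemma sum_digits_rec (p : ℕ) (hp : 1 < p) (n : ℕ) :
    (Nat.digits p n).sum = n % p + (Nat.digits p (n / p)).sum := by
  rcases Nat.eq_zero_or_pos n with rfl | hn
  · simp
  · rw [Nat.digits_def' hp hn]; simp

lemma sum_digits_compl (p : ℕ) (hp : 1 < p) :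
    ∀ k n, n < p ^ k →
      (Nat.digits p (p ^ k - 1 - n)).sum + (Nat.digits p n).sum = (p - 1) * k := by
  intro k
  induction k with
  | zero =>
    intro n hn
    rw [pow_zero] at hn
    have : n = 0 := by omega
    subst this; simp
  | succ k ih =>
    intro n hn
    have hq : n / p < p ^ k := by
      rw [Nat.div_lt_iff_lt_mul (by omega)]
      calc n < p ^ (k + 1) := hn
        _ = p ^ k * p := by ring
    have hr : n % p < p := Nat.mod_lt _ (by omega)
    have hpk : 1 ≤ p ^ k := Nat.one_le_pow _ _ (by omega)
    have hdistr : p * (p ^ k - 1 - n / p) = p * p ^ k - p * 1 - p * (n / p) := by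
      rw [Nat.mul_sub, Nat.mul_sub]
    have hnd : n = p * (n / p) + n % p := (Nat.div_add_mod n p).symm
    have hpow : p ^ (k + 1) = p * p ^ k := by ring
    have hqle : p * (n / p) + p ≤ p * p ^ k := by
      have := Nat.succ_le_of_lt hq
      calc p * (n / p) + p = p * (n / p + 1) := by ring
        _ ≤ p * p ^ k := Nat.mul_le_mul_left p this
    have key : p ^ (k + 1) - 1 - n = p * (p ^ k - 1 - n / p) + (p - 1 - n % p) := by
      omega
    have hblt : p - 1 - n % p < p := by omega
    rw [key, sum_digits_rec p hp]
    rw [Nat.mul_add_mod, Nat.mod_eq_of_lt hblt]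
    rw [Nat.mul_add_div (by omega), Nat.div_eq_of_lt hblt, Nat.add_zero]
    rw [sum_digits_rec p hp n]
    have hih := ih (n / p) hq
    have hexp : (p - 1) * (k + 1) = (p - 1) * k + (p - 1) := by ring
    omega

/-- For a prime `p` and `1 ≤ m < p^k` with `p ∤ m`,
`s_p(p^k - m) = (p - 1) * k + 1 - s_p(m)`, where `s_p` is the sum of base-`p` digits. -/
theorem sum_digits_pow_sub (p : ℕ) (hp : p.Prime) (k m : ℕ)
    (hm : 1 ≤ m) (hmk : m < p ^ k) (hpm : ¬ p ∣ m) :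
    (Nat.digits p (p ^ k - m)).sum = (p - 1) * k + 1 - (Nat.digits p m).sum := by
  have hp1 : 1 < p := hp.one_lt
  have hcompl := sum_digits_compl p hp1 k (m - 1) (by omega)
  have hsub : p ^ k - 1 - (m - 1) = p ^ k - m := by omega
  rw [hsub] at hcompl
  have hmod : m % p ≠ 0 := fun h => hpm (Nat.dvd_of_mod_eq_zero h)
  have hmlt : m % p < p := Nat.mod_lt _ (by omega)
  have hd : m = p * (m / p) + m % p := (Nat.div_add_mod m p).symm
  have hm1 : m - 1 = p * (m / p) + (m % p - 1) := by omega
  have hlt : m % p - 1 < p := by omega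
  have hstep : (Nat.digits p m).sum = (Nat.digits p (m - 1)).sum + 1 := by
    rw [sum_digits_rec p hp1 m, sum_digits_rec p hp1 (m - 1), hm1]
    rw [Nat.mul_add_mod, Nat.mod_eq_of_lt hlt]
    rw [Nat.mul_add_div (by omega), Nat.div_eq_of_lt hlt, Nat.add_zero]
    simp only [add_zero, Nat.add_zero]
    omega
  omega
end

section
/- Let R be a commutative ring, p a prime, and x, y ∈ R. Write ε = x − y. Suppose ε^(p^k) = 0 and p^j · ε = 0 (the j-th power of p, acting as an integer multiple, annihilates ε). Then for every natural number n with n ≥ j + k, x^(p^n) = y^(p^n). -/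
/-- In a commutative ring, if `ε = x - y` satisfies `ε^(p^k) = 0` and `p^j • ε = 0`,
then `x^(p^n) = y^(p^n)` for every `n ≥ j + k`. -/
theorem pow_prime_pow_eq_of_nilpotent_sub {R : Type*} [CommRing R] (p : ℕ) (hp : p.Prime)
    (x y : R) (j k : ℕ) (hnil : (x - y) ^ (p ^ k) = 0) (htor : (p ^ j : ℕ) • (x - y) = 0)
    (n : ℕ) (hn : j + k ≤ n) :
    x ^ (p ^ n) = y ^ (p ^ n) := by
  set ε := x - y with hεdef
  have hpn : 0 < p ^ n := pow_pos hp.pos n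
  have htor' : (p : R) ^ j * ε = 0 := by
    have := htor
    rwa [nsmul_eq_mul, Nat.cast_pow] at this
  have hx : x = ε + y := by rw [hεdef]; ring
  rw [hx, add_pow]
  have hterm : ∀ i ∈ Finset.range (p ^ n + 1), i ≠ 0 →
      ε ^ i * y ^ (p ^ n - i) * ((p ^ n).choose i : R) = 0 := by
    intro i hi hi0
    have hi0' : 0 < i := Nat.pos_of_ne_zero hi0
    have hile : i ≤ p ^ n := by
      have := Finset.mem_range.mp hi; omega
    rcases le_or_gt (p ^ k) i with h | h
    · have hz : ε ^ i = 0 := by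
        calc ε ^ i = ε ^ (p ^ k) * ε ^ (i - p ^ k) := by
              rw [← pow_add]; congr 1; omega
          _ = 0 := by rw [hnil, zero_mul]
      rw [hz, zero_mul, zero_mul]
    · have hc0 : (p ^ n).choose i ≠ 0 := (Nat.choose_pos hile).ne'
      have key : p ^ n ∣ (p ^ n).choose i * i := by
        have h1 := Nat.add_one_mul_choose_eq (p ^ n - 1) (i - 1)
        rw [Nat.sub_add_cancel hpn,
          Nat.sub_add_cancel hi0'] at h1
        exact ⟨(p ^ n - 1).choose (i - 1), h1.symm⟩
      have hfac : n ≤ ((p ^ n).choose i * i).factorization p := by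
        rw [← Nat.Prime.pow_dvd_iff_le_factorization hp (by positivity)]
        exact key
      rw [Nat.factorization_mul hc0 hi0'.ne', Finsupp.add_apply] at hfac
      have hik : i.factorization p < k := by
        by_contra hcon
        push_neg at hcon
        have : p ^ k ∣ i := (Nat.Prime.pow_dvd_iff_le_factorization hp hi0'.ne').mpr hcon
        exact absurd (Nat.le_of_dvd hi0' this) (not_le.mpr h)
      have hdvd : p ^ j ∣ (p ^ n).choose i :=
        (Nat.Prime.pow_dvd_iff_le_factorization hp hc0).mpr (by omega)
      obtain ⟨m, hm⟩ := hdvd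
      calc ε ^ i * y ^ (p ^ n - i) * ((p ^ n).choose i : R)
          = ((p : R) ^ j * ε) * (ε ^ (i - 1) * y ^ (p ^ n - i) * (m : R)) := by
            rw [hm, Nat.cast_mul, Nat.cast_pow]
            have : ε ^ i = ε * ε ^ (i - 1) := by
              rw [← pow_succ']; congr 1; omega
            rw [this]; ring
        _ = 0 := by rw [htor', zero_mul]
  rw [Finset.sum_eq_single 0 hterm (by intro h; simp at h)]
  simp
end

section
/- Let C be a monoidal category with unit object 𝟙, let α : 𝟙 ⟶ A be a central morphism, let M be an object of C, and let μ : A ⊗ M ⟶ M be a morphism such that ((λ_M)⁻¹ ≫ (α ▷ M)) ≫ μ = id_M. Then (λ_M)⁻¹ ≫ (α ▷ M) : M ⟶ A ⊗ M is an isomorphism with inverse μ; in particular μ ≫ ((λ_M)⁻¹ ≫ (α ▷ M)) = id_{A ⊗ M}. -/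
open CategoryTheory MonoidalCategory

/-- A morphism `α : 𝟙 ⟶ A` in a monoidal category is central if
`α ⊗ id_A` and `id_A ⊗ α` agree up to the unitor identifications. -/
def IsCentral {C : Type*} [Category C] [MonoidalCategory C] {A : C}
    (α : 𝟙_ C ⟶ A) : Prop :=
  (λ_ A).inv ≫ (α ▷ A) = (ρ_ A).inv ≫ (A ◁ α)

/-- If `α : 𝟙 ⟶ A` is central and `μ : A ⊗ M ⟶ M` is unital, i.e.
`((λ_M)⁻¹ ≫ (α ▷ M)) ≫ μ = id_M`, then `(λ_M)⁻¹ ≫ (α ▷ M)` is an isomorphism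
with inverse `μ`; in particular `μ ≫ ((λ_M)⁻¹ ≫ (α ▷ M)) = id`. -/
theorem isIso_of_central_unital {C : Type*} [Category C] [MonoidalCategory C]
    {A M : C} (α : 𝟙_ C ⟶ A) (hα : IsCentral α) (μ : A ⊗ M ⟶ M)
    (hμ : ((λ_ M).inv ≫ (α ▷ M)) ≫ μ = 𝟙 M) :
    IsIso ((λ_ M).inv ≫ (α ▷ M)) ∧
      μ ≫ ((λ_ M).inv ≫ (α ▷ M)) = 𝟙 (A ⊗ M) := by
  have key : μ ≫ ((λ_ M).inv ≫ (α ▷ M)) = 𝟙 (A ⊗ M) := by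
    calc μ ≫ ((λ_ M).inv ≫ (α ▷ M))
        = (λ_ (A ⊗ M)).inv ≫ (𝟙_ C ◁ μ) ≫ (α ▷ M) := by
          rw [leftUnitor_inv_naturality_assoc]
      _ = (λ_ (A ⊗ M)).inv ≫ (α ▷ (A ⊗ M)) ≫ (A ◁ μ) := by
          rw [whisker_exchange]
      _ = ((λ_ A).inv ▷ M) ≫ ((α ▷ A) ▷ M) ≫ (α_ A A M).hom ≫ (A ◁ μ) := by
          rw [leftUnitor_tensor_inv, Category.assoc, associator_naturality_left_assoc]
      _ = ((((λ_ A).inv ≫ (α ▷ A)) ▷ M)) ≫ (α_ A A M).hom ≫ (A ◁ μ) := by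
          rw [comp_whiskerRight, Category.assoc]
      _ = ((ρ_ A).inv ▷ M) ≫ ((A ◁ α) ▷ M) ≫ (α_ A A M).hom ≫ (A ◁ μ) := by
          rw [hα, comp_whiskerRight, Category.assoc]
      _ = ((ρ_ A).inv ▷ M) ≫ (α_ A (𝟙_ C) M).hom ≫ (A ◁ (α ▷ M)) ≫ (A ◁ μ) := by
          rw [associator_naturality_middle_assoc]
      _ = A ◁ ((λ_ M).inv ≫ (α ▷ M) ≫ μ) := by
          rw [triangle_assoc_comp_right_inv_assoc, ← MonoidalCategory.whiskerLeft_comp,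
            ← MonoidalCategory.whiskerLeft_comp]
      _ = 𝟙 (A ⊗ M) := by
          rw [← Category.assoc, hμ, MonoidalCategory.whiskerLeft_id]
  exact ⟨⟨μ, hμ, key⟩, key⟩
end

section
/- Let C be a symmetric (or braided) monoidal category with unit object 𝟙 and let e : 𝟙 ⟶ A be a morphism. Then: (i) (λ_A)⁻¹ ≫ (e ▷ A) : A ⟶ A ⊗ A is an isomorphism if and only if (ρ_A)⁻¹ ≫ (A ◁ e) : A ⟶ A ⊗ A is an isomorphism; (ii) if these maps are isomorphisms, then (λ_A)⁻¹ ≫ (e ▷ A) = (ρ_A)⁻¹ ≫ (A ◁ e), i.e. e ⊗ id_A and id_A ⊗ e agree up to the unitor identifications. -/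
open CategoryTheory MonoidalCategory

/-- In a braided (e.g. symmetric) monoidal category, for a morphism `e : 𝟙 ⟶ A`:
(i) `(λ_A)⁻¹ ≫ (e ▷ A)` is an isomorphism iff `(ρ_A)⁻¹ ≫ (A ◁ e)` is; and
(ii) if these are isomorphisms then they are equal. -/
theorem idempotent_symm {C : Type*} [Category C] [MonoidalCategory C]
    [BraidedCategory C] {A : C} (e : 𝟙_ C ⟶ A) :
    (IsIso ((λ_ A).inv ≫ (e ▷ A)) ↔ IsIso ((ρ_ A).inv ≫ (A ◁ e))) ∧
      (IsIso ((λ_ A).inv ≫ (e ▷ A)) →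
        (λ_ A).inv ≫ (e ▷ A) = (ρ_ A).inv ≫ (A ◁ e)) := by
  set f : A ⟶ A ⊗ A := (λ_ A).inv ≫ (e ▷ A) with hf
  set g : A ⟶ A ⊗ A := (ρ_ A).inv ≫ (A ◁ e) with hg
  -- relation via braiding
  have hfg : f ≫ (β_ A A).hom = g := by
    rw [hf, hg, Category.assoc, BraidedCategory.braiding_naturality_left,
      leftUnitor_inv_braiding_assoc]
  constructor
  · constructor
    · intro h
      rw [← hfg]; infer_instance
    · intro h
      have : f = g ≫ (β_ A A).inv := by rw [← hfg]; simp
      rw [this]; infer_instance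
  · intro h
    have hg' : IsIso g := by rw [← hfg]; infer_instance
    -- e ≫ f = e ≫ g
    have he : e ≫ f = e ≫ g := by
      rw [hf, hg, leftUnitor_inv_naturality_assoc, rightUnitor_inv_naturality_assoc,
        whisker_exchange, unitors_inv_equal]
    -- f ≫ (A ◁ f) = f ≫ (λ_ (A⊗A)).inv ≫ e ▷ (A ⊗ A)
    have hcompf : ∀ u : A ⟶ A ⊗ A, f ≫ (A ◁ u) = u ≫ (λ_ (A ⊗ A)).inv ≫ (e ▷ (A ⊗ A)) := by
      intro u
      rw [hf, Category.assoc, ← whisker_exchange, leftUnitor_inv_naturality_assoc]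
    -- closed form for A ◁ f
    have h2 : A ◁ f = (λ_ (A ⊗ A)).inv ≫ (e ▷ (A ⊗ A)) := by
      have := hcompf f
      rwa [cancel_epi f] at this
    -- A ◁ f = A ◁ g
    have h3 : A ◁ f = A ◁ g := by
      have hgf : g ≫ (A ◁ f) = g ≫ (A ◁ g) := by
        conv_lhs => rw [hg, Category.assoc, ← MonoidalCategory.whiskerLeft_comp, he]
        rw [hg, Category.assoc, ← MonoidalCategory.whiskerLeft_comp]
      rwa [cancel_epi g] at hgf
    -- conclude
    have main : f ≫ (A ◁ f) = g ≫ (A ◁ f) := by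
      calc f ≫ (A ◁ f) = f ≫ (A ◁ g) := by rw [h3]
        _ = g ≫ (λ_ (A ⊗ A)).inv ≫ (e ▷ (A ⊗ A)) := hcompf g
        _ = g ≫ (A ◁ f) := by rw [h2]
    rwa [cancel_mono (A ◁ f)] at main
end

section
/- Let C be a monoidal category with unit object 𝟙 and let A be a monoid object in C, with unit η : 𝟙 ⟶ A and multiplication μ : A ⊗ A ⟶ A. If the unit η is central, then η is idempotent: the map (λ_A)⁻¹ ≫ (η ▷ A) : A ⟶ A ⊗ A is an isomorphism with inverse the multiplication μ. -/
open CategoryTheory MonoidalCategory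

/-- If the unit of a monoid object `A` in a monoidal category is central, then it is
idempotent: `(λ_A)⁻¹ ≫ (η ▷ A)` is an isomorphism with inverse the multiplication. -/
theorem central_unit_of_monoid_is_idempotent {C : Type*} [Category C] [MonoidalCategory C]
    (A : Mon C) (h : IsCentral (MonObj.one (X := A.X))) :
    IsIso ((λ_ A.X).inv ≫ (MonObj.one (X := A.X) ▷ A.X)) ∧
      ((λ_ A.X).inv ≫ (MonObj.one (X := A.X) ▷ A.X)) ≫ MonObj.mul (X := A.X) = 𝟙 A.X ∧
      MonObj.mul (X := A.X) ≫ ((λ_ A.X).inv ≫ (MonObj.one (X := A.X) ▷ A.X)) = 𝟙 (A.X ⊗ A.X) := by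
  have h1 : ((λ_ A.X).inv ≫ ((MonObj.one (X := A.X)) ▷ A.X)) ≫ (MonObj.mul (X := A.X)) = 𝟙 A.X := by
    simp [MonObj.one_mul]
  have h2 : (MonObj.mul (X := A.X)) ≫ ((λ_ A.X).inv ≫ ((MonObj.one (X := A.X)) ▷ A.X)) = 𝟙 (A.X ⊗ A.X) := by
    have nat : (MonObj.mul (X := A.X)) ≫ (λ_ A.X).inv = (λ_ (A.X ⊗ A.X)).inv ≫ (𝟙_ C ◁ (MonObj.mul (X := A.X))) := by
      simp
    calc (MonObj.mul (X := A.X)) ≫ ((λ_ A.X).inv ≫ ((MonObj.one (X := A.X)) ▷ A.X))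
        = (λ_ (A.X ⊗ A.X)).inv ≫ (𝟙_ C ◁ (MonObj.mul (X := A.X))) ≫ ((MonObj.one (X := A.X)) ▷ A.X) := by
          rw [← Category.assoc, nat]; simp
      _ = (λ_ (A.X ⊗ A.X)).inv ≫ ((MonObj.one (X := A.X)) ▷ (A.X ⊗ A.X)) ≫ (A.X ◁ (MonObj.mul (X := A.X))) := by
          rw [whisker_exchange]
      _ = ((λ_ A.X).inv ▷ A.X) ≫ (α_ _ _ _).hom ≫ ((MonObj.one (X := A.X)) ▷ (A.X ⊗ A.X)) ≫ (A.X ◁ (MonObj.mul (X := A.X))) := by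
          rw [leftUnitor_inv_whiskerRight]; simp
      _ = ((λ_ A.X).inv ▷ A.X) ≫ (((MonObj.one (X := A.X)) ▷ A.X) ▷ A.X) ≫ (α_ _ _ _).hom ≫ (A.X ◁ (MonObj.mul (X := A.X))) := by
          rw [associator_naturality_left_assoc]
      _ = (((ρ_ A.X).inv ≫ (A.X ◁ (MonObj.one (X := A.X)))) ▷ A.X) ≫ (α_ _ _ _).hom ≫ (A.X ◁ (MonObj.mul (X := A.X))) := by
          rw [← h]; simp
      _ = ((ρ_ A.X).inv ▷ A.X) ≫ (α_ _ _ _).hom ≫ (A.X ◁ ((MonObj.one (X := A.X)) ▷ A.X)) ≫ (A.X ◁ (MonObj.mul (X := A.X))) := by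
          simp [associator_naturality_middle_assoc]
      _ = ((ρ_ A.X).inv ▷ A.X) ≫ (α_ _ _ _).hom ≫ (A.X ◁ (λ_ A.X).hom) := by
          rw [← MonoidalCategory.whiskerLeft_comp, MonObj.one_mul]
      _ = 𝟙 (A.X ⊗ A.X) := by
          rw [triangle]; simp
  exact ⟨⟨⟨(MonObj.mul (X := A.X)), h1, h2⟩⟩, h1, h2⟩
end

section
/- Let C be a monoidal category with unit object 𝟙, let e : 𝟙 ⟶ R₂ be a central morphism, let R₁ be a monoid object in C with unit η : 𝟙 ⟶ R₁ and multiplication μ : R₁ ⊗ R₁ ⟶ R₁, and let f : R₂ ⟶ R₁ be a morphism with e ≫ f = η (a unit-preserving map). Then (λ_{R₁})⁻¹ ≫ (e ▷ R₁) : R₁ ⟶ R₂ ⊗ R₁ is an isomorphism, with inverse (f ▷ R₁) ≫ μ. -/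
open CategoryTheory MonoidalCategory

private lemma IsCentral.whisker {C : Type*} [Category C] [MonoidalCategory C] {A : C}
    {α : 𝟙_ C ⟶ A} (h : IsCentral α) (X : C) :
    (λ_ (A ⊗ X)).inv ≫ (α ▷ (A ⊗ X)) = A ◁ ((λ_ X).inv ≫ (α ▷ X)) := by
  rw [leftUnitor_tensor_inv_assoc, ← associator_naturality_left,
    ← comp_whiskerRight_assoc, h, comp_whiskerRight_assoc,
    associator_naturality_middle, MonoidalCategory.whiskerLeft_comp,
    ← Category.assoc]
  congr 1
  rw [← cancel_mono (A ◁ (λ_ X).hom)]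
  simp

/-- If `e : 𝟙 ⟶ R₂` is central, `R₁` is a monoid object, and `f : R₂ ⟶ R₁` is
unit-preserving (`e ≫ f = η`), then `(λ_{R₁})⁻¹ ≫ (e ▷ R₁)` is an isomorphism
with inverse `(f ▷ R₁) ≫ μ`. -/
theorem isIso_of_central_of_unit_map {C : Type*} [Category C] [MonoidalCategory C]
    {R₂ : C} (e : 𝟙_ C ⟶ R₂) (he : IsCentral e) (R₁ : Mon C)
    (f : R₂ ⟶ R₁.X) (hf : e ≫ f = (MonObj.one : 𝟙_ C ⟶ R₁.X)) :
    IsIso ((λ_ R₁.X).inv ≫ (e ▷ R₁.X)) ∧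
      ((λ_ R₁.X).inv ≫ (e ▷ R₁.X)) ≫ ((f ▷ R₁.X) ≫ (MonObj.mul : R₁.X ⊗ R₁.X ⟶ R₁.X)) = 𝟙 R₁.X ∧
      ((f ▷ R₁.X) ≫ (MonObj.mul : R₁.X ⊗ R₁.X ⟶ R₁.X)) ≫ ((λ_ R₁.X).inv ≫ (e ▷ R₁.X)) = 𝟙 (R₂ ⊗ R₁.X) := by
  have hgh : ((λ_ R₁.X).inv ≫ (e ▷ R₁.X)) ≫ ((f ▷ R₁.X) ≫ (MonObj.mul : R₁.X ⊗ R₁.X ⟶ R₁.X)) = 𝟙 R₁.X := by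
    rw [Category.assoc, ← comp_whiskerRight_assoc, hf, MonObj.one_mul, Iso.inv_hom_id]
  have hhg : ((f ▷ R₁.X) ≫ (MonObj.mul : R₁.X ⊗ R₁.X ⟶ R₁.X)) ≫ ((λ_ R₁.X).inv ≫ (e ▷ R₁.X)) = 𝟙 (R₂ ⊗ R₁.X) := by
    calc ((f ▷ R₁.X) ≫ (MonObj.mul : R₁.X ⊗ R₁.X ⟶ R₁.X)) ≫ ((λ_ R₁.X).inv ≫ (e ▷ R₁.X))
        = ((λ_ (R₂ ⊗ R₁.X)).inv ≫ (e ▷ (R₂ ⊗ R₁.X))) ≫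
            (R₂ ◁ ((f ▷ R₁.X) ≫ (MonObj.mul : R₁.X ⊗ R₁.X ⟶ R₁.X))) := by
          rw [Category.assoc, leftUnitor_inv_naturality_assoc,
            leftUnitor_inv_naturality_assoc, whisker_exchange,
            whisker_exchange_assoc]
          simp [MonoidalCategory.whiskerLeft_comp]
      _ = (R₂ ◁ ((λ_ R₁.X).inv ≫ (e ▷ R₁.X))) ≫
            (R₂ ◁ ((f ▷ R₁.X) ≫ (MonObj.mul : R₁.X ⊗ R₁.X ⟶ R₁.X))) := by rw [he.whisker]
      _ = 𝟙 (R₂ ⊗ R₁.X) := by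
          rw [← MonoidalCategory.whiskerLeft_comp, hgh,
            MonoidalCategory.whiskerLeft_id]
  exact ⟨⟨⟨(f ▷ R₁.X) ≫ (MonObj.mul : R₁.X ⊗ R₁.X ⟶ R₁.X), hgh, hhg⟩⟩, hgh, hhg⟩
end

section
/- Let C be a symmetric (or braided) monoidal category with unit object 𝟙 and let e : 𝟙 ⟶ R be an idempotent morphism. Then the identity is the only unit-preserving endomorphism of R: any morphism f : R ⟶ R with e ≫ f = e equals id_R. -/
open CategoryTheory MonoidalCategory

/-- In a braided (e.g. symmetric) monoidal category, if `e : 𝟙 ⟶ R` is idempotent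
(i.e. `(λ_R)⁻¹ ≫ (e ▷ R)` is an isomorphism), then the identity is the only
unit-preserving endomorphism of `R`: any `f : R ⟶ R` with `e ≫ f = e` is `id_R`. -/
theorem endomorphism_of_idempotent_is_id {C : Type*} [Category C] [MonoidalCategory C]
    [BraidedCategory C] {R : C} (e : 𝟙_ C ⟶ R)
    (he : IsIso ((λ_ R).inv ≫ (e ▷ R)))
    (f : R ⟶ R) (hf : e ≫ f = e) : f = 𝟙 R := by
  set g : R ⟶ R ⊗ R := (λ_ R).inv ≫ (e ▷ R) with hg
  have h1 : g ≫ (f ▷ R) = g := by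
    rw [hg, Category.assoc, ← comp_whiskerRight, hf]
  have h2 : f ▷ R = 𝟙 (R ⊗ R) := by
    have := h1
    rw [← cancel_epi g]
    simpa using h1
  have h3 : R ◁ f = 𝟙 (R ⊗ R) := by
    have hb : (f ▷ R) ≫ (β_ R R).hom = (β_ R R).hom ≫ (R ◁ f) :=
      BraidedCategory.braiding_naturality_left f R
    rw [h2, Category.id_comp] at hb
    rw [← cancel_epi (β_ R R).hom, Category.comp_id, ← hb]
  have h4 : f ≫ g = g := by
    calc f ≫ g = ((λ_ R).inv ≫ (𝟙_ C ◁ f)) ≫ (e ▷ R) := by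
          rw [hg, ← Category.assoc]
          congr 1
          simpa using (leftUnitor_inv_naturality f)
      _ = (λ_ R).inv ≫ (e ▷ R) ≫ (R ◁ f) := by
          rw [Category.assoc, whisker_exchange]
      _ = g := by rw [h3, Category.comp_id, hg]
  rw [← cancel_mono g, Category.id_comp, h4]
end
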